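/- Let k be an algebraically closed field of characteristic different from 2 and w = (a_0,…,a_5) ∈ V_5 with Cat_{2,2}(x,y:w) ≠ 0. Then there are at most 4 classes [f] ∈ P(V_2^*) of nonzero binary quadratic forms over k such that f² is apolar to w. -/

import Mathlib

open Finset

/-- Multiplication of binary forms encoded by coefficient tuples: a binary form
`∑ i, f i • x^(a-i) * y^i` of degree `a` is encoded as the tuple `f : Fin (a+1) → k`,
and multiplication of forms is convolution of coefficient tuples. -/
def formMul {k : Type*} [CommRing k] {a b : ℕ} (f : Fin (a + 1) → k)
    (g : Fin (b + 1) → k) : Fin (a + b + 1) → k :=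
  fun i => ∑ q : Fin (a + 1) × Fin (b + 1),
    if (q.1 : ℕ) + (q.2 : ℕ) = (i : ℕ) then f q.1 * g q.2 else 0

/-- The pairing `(w, v) = ∑ i, w i * v i` between `V_n` and `V_n^*`. -/
def pair {k : Type*} [CommRing k] {n : ℕ} (w v : Fin (n + 1) → k) : k :=
  ∑ i, w i * v i

/-- The catalecticant covariant `Cat_{2,2}(x,y:w) = det (x•A₁ - y•A₀)`, a binary cubic
form, regarded as a polynomial in the two variables `x = X 0` and `y = X 1`. -/
noncomputable def cat22 {k : Type*} [CommRing k] (w : Fin 6 → k) :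
    MvPolynomial (Fin 2) k :=
  Matrix.det (Matrix.of fun i j : Fin 3 =>
    MvPolynomial.X 0 * MvPolynomial.C (w ⟨(i : ℕ) + (j : ℕ) + 1, by omega⟩) -
    MvPolynomial.X 1 * MvPolynomial.C (w ⟨(i : ℕ) + (j : ℕ), by omega⟩))

section AuxiliaryLemmas

open Matrix Polynomial


lemma list_subset_four {α : Type*} (d : α) (F : Finset α) (h : F.card ≤ 4) :
    ∃ x1 x2 x3 x4 : α, (F : Set α) ⊆ {x1, x2, x3, x4} := by
  refine ⟨F.toList.getD 0 d, F.toList.getD 1 d, F.toList.getD 2 d, F.toList.getD 3 d, ?_⟩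
  intro x hx
  have hxl : x ∈ F.toList := Finset.mem_toList.mpr hx
  obtain ⟨n, hn, rfl⟩ := List.mem_iff_getElem.mp hxl
  have hlen : F.toList.length ≤ 4 := by rw [Finset.length_toList]; exact h
  have h4 : n < 4 := lt_of_lt_of_le hn hlen
  interval_cases n
  · exact Or.inl ((List.getD_eq_getElem _ d hn).symm)
  · exact Or.inr (Or.inl ((List.getD_eq_getElem _ d hn).symm))
  · exact Or.inr (Or.inr (Or.inl ((List.getD_eq_getElem _ d hn).symm)))
  · exact Or.inr (Or.inr (Or.inr ((List.getD_eq_getElem _ d hn).symm)))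

lemma congr_vec {k : Type*} [CommRing k] (P A : Matrix (Fin 3) (Fin 3) k) (x : Fin 3 → k) :
    dotProduct (P.mulVec x) (A.mulVec (P.mulVec x))
      = dotProduct x ((Pᵀ * A * P).mulVec x) := by
  simp [Matrix.mulVec, dotProduct, Matrix.mul_apply, Matrix.transpose_apply,
    Fin.sum_univ_three]
  ring

lemma bil_symm {k : Type*} [CommRing k] {B : Matrix (Fin 3) (Fin 3) k}
    (hBs : ∀ i j, B i j = B j i) (f g : Fin 3 → k) :
    dotProduct f (B.mulVec g) = dotProduct g (B.mulVec f) := by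
  simp only [Matrix.mulVec, dotProduct, Fin.sum_univ_three]
  rw [hBs 1 0, hBs 2 0, hBs 2 1]; ring

lemma exists_isotropic {k : Type*} [Field k] [IsAlgClosed k]
    (B : Matrix (Fin 3) (Fin 3) k) :
    ∃ p : Fin 3 → k, p ≠ 0 ∧ dotProduct p (B.mulVec p) = 0 := by
  by_cases h22 : B 2 2 = 0
  · refine ⟨![0,0,1], ?_, ?_⟩
    · intro h; have := congrFun h 2; simp at this
    · simp [Matrix.mulVec, dotProduct, Fin.sum_univ_three, h22]
  · obtain ⟨τ, hτ⟩ := IsAlgClosed.exists_root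
      (C (B 2 2) * X ^ 2 + C (B 1 2 + B 2 1) * X + C (B 1 1))
      (by rw [Polynomial.degree_quadratic h22]; exact two_ne_zero)
    refine ⟨![0,1,τ], ?_, ?_⟩
    · intro h; have := congrFun h 1; simp at this
    · have hev := hτ
      simp only [Polynomial.IsRoot, Polynomial.eval_add, Polynomial.eval_mul,
        Polynomial.eval_pow, Polynomial.eval_C, Polynomial.eval_X] at hev
      simp [Matrix.mulVec, dotProduct, Fin.sum_univ_three]
      linear_combination hev

lemma exists_hyperbolic {k : Type*} [Field k] [IsAlgClosed k] (h2 : (2:k) ≠ 0)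
    (B : Matrix (Fin 3) (Fin 3) k) (hBs : ∀ i j, B i j = B j i) (hdetB : B.det ≠ 0) :
    ∃ (P : Matrix (Fin 3) (Fin 3) k) (c : k), P.det ≠ 0 ∧ c ≠ 0 ∧
      Pᵀ * B * P = !![0,1,0;1,0,0;0,0,c] := by
  classical
  obtain ⟨p, hp0, hpp⟩ := exists_isotropic B
  have hBp : B.mulVec p ≠ 0 := fun h =>
    hdetB (Matrix.exists_mulVec_eq_zero_iff.mp ⟨p, hp0, h⟩)
  obtain ⟨j, hj⟩ : ∃ j, B.mulVec p j ≠ 0 := by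
    by_contra hcon; push_neg at hcon; exact hBp (funext hcon)
  -- construct hyperbolic partner u
  obtain ⟨u, hpu, hup, huu⟩ : ∃ u, dotProduct p (B.mulVec u) = 1 ∧
      dotProduct u (B.mulVec p) = 1 ∧ dotProduct u (B.mulVec u) = 0 := by
    have hpu0 : dotProduct p (B.mulVec (Pi.single j 1 : Fin 3 → k)) = B.mulVec p j := by
      rw [bil_symm hBs]
      simp [dotProduct, Pi.single_apply]
    obtain ⟨u1, hu1def⟩ : ∃ u1 : Fin 3 → k, u1 = (B.mulVec p j)⁻¹ • (Pi.single j 1 : Fin 3 → k) :=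
      ⟨_, rfl⟩
    have hpu1 : dotProduct p (B.mulVec u1) = 1 := by
      rw [hu1def, Matrix.mulVec_smul, dotProduct_smul, hpu0, smul_eq_mul,
        inv_mul_cancel₀ hj]
    have hu1p : dotProduct u1 (B.mulVec p) = 1 := by rw [bil_symm hBs]; exact hpu1
    obtain ⟨d, hd⟩ : ∃ d : k, d = dotProduct u1 (B.mulVec u1) := ⟨_, rfl⟩
    refine ⟨u1 - (d/2) • p, ?_, ?_, ?_⟩
    · rw [Matrix.mulVec_sub, Matrix.mulVec_smul, dotProduct_sub,
        dotProduct_smul, hpu1, hpp]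
      simp
    · rw [bil_symm hBs, Matrix.mulVec_sub, Matrix.mulVec_smul, dotProduct_sub,
        dotProduct_smul, hpu1, hpp]
      simp
    · rw [Matrix.mulVec_sub, Matrix.mulVec_smul, sub_dotProduct,
        smul_dotProduct, dotProduct_sub, dotProduct_sub,
        dotProduct_smul, dotProduct_smul, ← hd, hu1p, hpp,
        hpu1]
      simp only [smul_eq_mul]
      field_simp
      ring
  -- a vector outside span {p, u}
  obtain ⟨z, hz⟩ : ∃ z : Fin 3 → k, z ∉ Submodule.span k {p, u} := by
    by_contra hcon; push_neg at hcon
    have htop : Submodule.span k ({p, u} : Set (Fin 3 → k)) = ⊤ :=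
      Submodule.eq_top_iff'.mpr hcon
    have h1 : Module.finrank k (Fin 3 → k) ≤ 2 := by
      rw [← finrank_top, ← htop]
      refine le_trans (finrank_span_le_card _) ?_
      rw [Set.toFinset_insert, Set.toFinset_singleton]
      exact (Finset.card_insert_le _ _).trans (by simp)
    rw [Module.finrank_pi] at h1
    simp at h1
  obtain ⟨v, hpv, huv, hvp, hvu, hv0⟩ : ∃ v, dotProduct p (B.mulVec v) = 0 ∧
      dotProduct u (B.mulVec v) = 0 ∧ dotProduct v (B.mulVec p) = 0 ∧
      dotProduct v (B.mulVec u) = 0 ∧ v ≠ 0 := by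
    refine ⟨z - (dotProduct u (B.mulVec z)) • p
      - (dotProduct p (B.mulVec z)) • u, ?_, ?_, ?_, ?_, ?_⟩
    · rw [Matrix.mulVec_sub, Matrix.mulVec_sub, Matrix.mulVec_smul, Matrix.mulVec_smul,
        dotProduct_sub, dotProduct_sub, dotProduct_smul,
        dotProduct_smul, hpp, hpu]
      simp
    · rw [Matrix.mulVec_sub, Matrix.mulVec_sub, Matrix.mulVec_smul, Matrix.mulVec_smul,
        dotProduct_sub, dotProduct_sub, dotProduct_smul,
        dotProduct_smul, hup, huu]
      simp
    · rw [bil_symm hBs, Matrix.mulVec_sub, Matrix.mulVec_sub, Matrix.mulVec_smul,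
        Matrix.mulVec_smul, dotProduct_sub, dotProduct_sub,
        dotProduct_smul, dotProduct_smul, hpp, hpu]
      simp
    · rw [bil_symm hBs, Matrix.mulVec_sub, Matrix.mulVec_sub, Matrix.mulVec_smul,
        Matrix.mulVec_smul, dotProduct_sub, dotProduct_sub,
        dotProduct_smul, dotProduct_smul, hup, huu]
      simp
    · intro h
      apply hz
      have h' : z = (dotProduct u (B.mulVec z)) • p
          + (dotProduct p (B.mulVec z)) • u := by
        have h'' : z - ((dotProduct u (B.mulVec z)) • p
            + (dotProduct p (B.mulVec z)) • u) = 0 := by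
          rw [sub_add_eq_sub_sub]; exact h
        exact sub_eq_zero.mp h''
      rw [h']
      exact Submodule.add_mem _
        (Submodule.smul_mem _ _ (Submodule.subset_span (by simp)))
        (Submodule.smul_mem _ _ (Submodule.subset_span (by simp)))
  obtain ⟨c, hc⟩ : ∃ c : k, c = dotProduct v (B.mulVec v) := ⟨_, rfl⟩
  obtain ⟨P, hPdef⟩ : ∃ P : Matrix (Fin 3) (Fin 3) k,
      P = Matrix.of (fun i j => ![p, u, v] j i) := ⟨_, rfl⟩
  have hPmul : ∀ x : Fin 3 → k, P.mulVec x = x 0 • p + x 1 • u + x 2 • v := by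
    intro x; funext i
    simp [hPdef, Matrix.mulVec, dotProduct, Fin.sum_univ_three]
    ring
  have hPinj : ∀ x : Fin 3 → k, P.mulVec x = 0 → x = 0 := by
    intro x hx
    rw [hPmul] at hx
    have e1 : x 1 = 0 := by
      have h := congrArg (fun y => dotProduct p (B.mulVec y)) hx
      simpa [Matrix.mulVec_add, Matrix.mulVec_smul, dotProduct_add,
        dotProduct_smul, hpp, hpu, hpv] using h
    have e0 : x 0 = 0 := by
      have h := congrArg (fun y => dotProduct u (B.mulVec y)) hx
      simpa [Matrix.mulVec_add, Matrix.mulVec_smul, dotProduct_add,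
        dotProduct_smul, hup, huu, huv] using h
    have e2 : x 2 = 0 := by
      rw [e0, e1] at hx
      simp only [zero_smul, zero_add, add_zero] at hx
      rcases smul_eq_zero.mp hx with h | h
      · exact h
      · exact absurd h hv0
    funext i; fin_cases i <;> assumption
  have hdetP : P.det ≠ 0 := by
    intro h
    obtain ⟨x, hx0, hx⟩ := Matrix.exists_mulVec_eq_zero_iff.mpr h
    exact hx0 (hPinj x hx)
  have key : ∀ i j, (Pᵀ * B * P) i j
      = dotProduct (fun r => P r i) (B.mulVec (fun r => P r j)) := by
    intro i j
    simp [Matrix.mul_apply, Matrix.mulVec, dotProduct, Matrix.transpose_apply,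
      Fin.sum_univ_three]
    ring
  have hGram : Pᵀ * B * P = !![0,1,0;1,0,0;0,0,c] := by
    funext i j
    rw [key, hPdef]
    fin_cases i <;> fin_cases j
    · exact hpp
    · exact hpu
    · exact hpv
    · exact hup
    · exact huu
    · exact huv
    · exact hvp
    · exact hvu
    · exact hc.symm
  have hcne : c ≠ 0 := by
    intro h
    have hdg : (Pᵀ * B * P).det = -c := by
      rw [hGram, Matrix.det_fin_three]
      simp
    rw [Matrix.det_mul, Matrix.det_mul, Matrix.det_transpose, h, neg_zero] at hdg
    exact (mul_ne_zero (mul_ne_zero hdetP hdetB) hdetP) hdg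
  exact ⟨P, c, hdetP, hcne, hGram⟩

section helpers
variable {k : Type*} [Field k]

lemma quart_expand (M : Matrix (Fin 3) (Fin 3) k) (c s t : k) :
    dotProduct ![s*s, -(c/2)*(t*t), s*t] (M.mulVec ![s*s, -(c/2)*(t*t), s*t])
    = (M 0 0)*s^4 + (M 0 2 + M 2 0)*s^3*t + (M 2 2 - (c/2)*(M 0 1 + M 1 0))*s^2*t^2
      + (-(c/2)*(M 1 2 + M 2 1))*s*t^3 + (((c/2)*(c/2))*(M 1 1))*t^4 := by
  simp [dotProduct, Matrix.mulVec, Fin.sum_univ_three]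
  ring

lemma gram_expand (c : k) (x : Fin 3 → k) :
    dotProduct x ((!![0,1,0;1,0,0;0,0,c] : Matrix (Fin 3) (Fin 3) k).mulVec x)
    = 2*(x 0)*(x 1) + c*(x 2)*(x 2) := by
  simp [dotProduct, Matrix.mulVec, Fin.sum_univ_three, Matrix.vecHead,
    Matrix.vecTail]
  ring


lemma conic_param [IsAlgClosed k] (h2 : (2:k) ≠ 0) {c : k} (hc : c ≠ 0)
    (ξ : Fin 3 → k) (hξ0 : ξ ≠ 0) (hcon : 2*(ξ 0)*(ξ 1) + c*(ξ 2)*(ξ 2) = 0) :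
    ∃ s t : k, ¬(s = 0 ∧ t = 0) ∧ (![s*s, -(c/2)*(t*t), s*t] : Fin 3 → k) = ξ := by
  by_cases h0 : ξ 0 = 0
  · have h22 : ξ 2 = 0 := by
      have hx : c * (ξ 2 * ξ 2) = 0 := by rw [h0] at hcon; linear_combination hcon
      rcases mul_eq_zero.mp hx with h | h
      · exact absurd h hc
      · exact mul_self_eq_zero.mp h
    have h1 : ξ 1 ≠ 0 := by
      intro h1
      apply hξ0
      funext i; fin_cases i <;> assumption
    obtain ⟨t, ht⟩ := IsAlgClosed.exists_pow_nat_eq (-(2*(ξ 1))/c) (n := 2) (by norm_num)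
    have htt : t * t = -(2*(ξ 1))/c := by rw [← ht]; ring
    refine ⟨0, t, ?_, ?_⟩
    · rintro ⟨-, ht0⟩
      rw [ht0, mul_zero] at htt
      apply h1
      have := (div_eq_zero_iff.mp htt.symm).resolve_right hc
      rcases mul_eq_zero.mp (neg_eq_zero.mp this) with h | h
      · exact absurd h h2
      · exact h
    · funext i; fin_cases i
      · simpa using h0.symm
      · show -(c/2)*(t*t) = ξ 1
        rw [htt]
        field_simp
      · simpa using h22.symm
  · obtain ⟨s, hs⟩ := IsAlgClosed.exists_pow_nat_eq (ξ 0) (n := 2) (by norm_num)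
    have hss : s * s = ξ 0 := by rw [← hs]; ring
    have hs0 : s ≠ 0 := by
      intro h; rw [h, mul_zero] at hss; exact h0 hss.symm
    refine ⟨s, ξ 2 / s, ?_, ?_⟩
    · rintro ⟨h, -⟩; exact hs0 h
    · funext i; fin_cases i
      · simpa using hss
      · show -(c/2)*((ξ 2 / s)*(ξ 2 / s)) = ξ 1
        field_simp
        linear_combination (-2*(ξ 1))*hss - hcon
      · simpa using (by field_simp : s * (ξ 2 / s) = ξ 2)
end helpers
def psiMap {k : Type*} [Field k] (P : Matrix (Fin 3) (Fin 3) k) (c s t : k) : Fin 3 → k :=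
  P.mulVec ![s*s, -(c/2)*(t*t), s*t]

lemma psiMap_ne_zero {k : Type*} [Field k] {P : Matrix (Fin 3) (Fin 3) k}
    (hdetP : P.det ≠ 0) {c : k} (hc : c ≠ 0) (h2 : (2:k) ≠ 0) {s t : k}
    (hst : ¬(s = 0 ∧ t = 0)) : psiMap P c s t ≠ 0 := by
  intro h
  have hη : (![s*s, -(c/2)*(t*t), s*t] : Fin 3 → k) ≠ 0 := by
    intro hη
    by_cases hs : s = 0
    · have ht : t ≠ 0 := fun ht => hst ⟨hs, ht⟩
      have h1 := congrFun hη 1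
      simp only [Matrix.cons_val_one, Matrix.head_cons, Matrix.cons_val_zero, Pi.zero_apply, neg_eq_zero,
        mul_eq_zero, _root_.div_eq_zero_iff] at h1
      tauto
    · have := congrFun hη 0
      simp at this
      exact hs this
  exact hdetP (Matrix.exists_mulVec_eq_zero_iff.mp ⟨_, hη, h⟩)

lemma psiMap_smul {k : Type*} [Field k] (P : Matrix (Fin 3) (Fin 3) k) (c a s t : k) :
    psiMap P c (a*s) (a*t) = (a*a) • psiMap P c s t := by
  unfold psiMap
  have hv : (![(a*s)*(a*s), -(c/2)*((a*t)*(a*t)), (a*s)*(a*t)] : Fin 3 → k)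
      = (a*a) • ![s*s, -(c/2)*(t*t), s*t] := by
    funext i; fin_cases i
    · show (a*s)*(a*s) = ((a*a) • (![s*s, -(c/2)*(t*t), s*t] : Fin 3 → k)) 0
      simp; ring
    · show -(c/2)*((a*t)*(a*t)) = ((a*a) • (![s*s, -(c/2)*(t*t), s*t] : Fin 3 → k)) 1
      simp; ring
    · show (a*s)*(a*t) = ((a*a) • (![s*s, -(c/2)*(t*t), s*t] : Fin 3 → k)) 2
      simp; ring
  rw [hv, Matrix.mulVec_smul]

lemma psiMap_quart {k : Type*} [Field k] (P A : Matrix (Fin 3) (Fin 3) k) (c s t : k) :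
    dotProduct (psiMap P c s t) (A.mulVec (psiMap P c s t))
    = ((Pᵀ*A*P) 0 0)*s^4 + ((Pᵀ*A*P) 0 2 + (Pᵀ*A*P) 2 0)*s^3*t
      + ((Pᵀ*A*P) 2 2 - (c/2)*((Pᵀ*A*P) 0 1 + (Pᵀ*A*P) 1 0))*s^2*t^2
      + (-(c/2)*((Pᵀ*A*P) 1 2 + (Pᵀ*A*P) 2 1))*s*t^3
      + (((c/2)*(c/2))*((Pᵀ*A*P) 1 1))*t^4 := by
  unfold psiMap
  rw [congr_vec, quart_expand]

lemma congr_cancel' {k : Type*} [Field k] (P A C : Matrix (Fin 3) (Fin 3) k)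
    (hP : IsUnit P.det) (h : Pᵀ * A * P = Pᵀ * C * P) : A = C := by
  have hPt : IsUnit Pᵀ.det := by rwa [Matrix.det_transpose]
  have h1 : ∀ X : Matrix (Fin 3) (Fin 3) k, (Pᵀ)⁻¹ * (Pᵀ * X * P) * P⁻¹ = X := by
    intro X
    rw [Matrix.mul_assoc (Pᵀ) X P, Matrix.nonsing_inv_mul_cancel_left _ _ hPt,
      Matrix.mul_assoc, Matrix.mul_nonsing_inv _ hP, Matrix.mul_one]
  rw [← h1 A, ← h1 C, h]

lemma prop_of_coeffs_zero {k : Type*} [Field k] (h2 : (2:k) ≠ 0)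
    (A B P : Matrix (Fin 3) (Fin 3) k) {c : k} (hc : c ≠ 0)
    (hAs : Aᵀ = A) (hPu : IsUnit P.det)
    (hGram : Pᵀ * B * P = !![0,1,0;1,0,0;0,0,c])
    (e0 : (Pᵀ*A*P) 0 0 = 0)
    (e1 : (Pᵀ*A*P) 0 2 + (Pᵀ*A*P) 2 0 = 0)
    (e2 : (Pᵀ*A*P) 2 2 - (c/2)*((Pᵀ*A*P) 0 1 + (Pᵀ*A*P) 1 0) = 0)
    (e3 : -(c/2)*((Pᵀ*A*P) 1 2 + (Pᵀ*A*P) 2 1) = 0)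
    (e4 : ((c/2)*(c/2))*((Pᵀ*A*P) 1 1) = 0) :
    A = ((Pᵀ*A*P) 0 1) • B := by
  have hc2 : c/2 ≠ 0 := div_ne_zero hc h2
  have hMs : (Pᵀ*A*P)ᵀ = Pᵀ*A*P := by
    rw [Matrix.transpose_mul, Matrix.transpose_mul, Matrix.transpose_transpose, hAs,
      Matrix.mul_assoc]
  have sym : ∀ i j, (Pᵀ*A*P) i j = (Pᵀ*A*P) j i := by
    intro i j
    conv_lhs => rw [← hMs]
    rfl
  have m20 : (Pᵀ*A*P) 2 0 = (Pᵀ*A*P) 0 2 := sym 2 0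
  have m10 : (Pᵀ*A*P) 1 0 = (Pᵀ*A*P) 0 1 := sym 1 0
  have m21 : (Pᵀ*A*P) 2 1 = (Pᵀ*A*P) 1 2 := sym 2 1
  have f02 : (Pᵀ*A*P) 0 2 = 0 := by
    have h' : (2:k) * ((Pᵀ*A*P) 0 2) = 0 := by rw [m20] at e1; linear_combination e1
    exact (mul_eq_zero.mp h').resolve_left h2
  have f11 : (Pᵀ*A*P) 1 1 = 0 := by
    rcases mul_eq_zero.mp e4 with h' | h'
    · exact absurd (mul_eq_zero.mp h') (by push_neg; exact ⟨hc2, hc2⟩)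
    · exact h'
  have f12 : (Pᵀ*A*P) 1 2 = 0 := by
    rcases mul_eq_zero.mp e3 with h' | h'
    · exact absurd h' (neg_ne_zero.mpr hc2)
    · rw [m21] at h'
      have h'' : (2:k) * ((Pᵀ*A*P) 1 2) = 0 := by linear_combination h'
      exact (mul_eq_zero.mp h'').resolve_left h2
  have ht2 : (c/2)*2 = c := by field_simp
  have f22 : (Pᵀ*A*P) 2 2 = c * ((Pᵀ*A*P) 0 1) := by
    rw [m10] at e2; linear_combination e2 + ((Pᵀ*A*P) 0 1) * ht2
  have key : Pᵀ*A*P = Pᵀ*(((Pᵀ*A*P) 0 1) • B)*P := by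
    rw [Matrix.mul_smul, Matrix.smul_mul, hGram]
    funext i j
    fin_cases i <;> fin_cases j <;> simp [Matrix.vecHead, Matrix.vecTail] <;>
      first
        | exact e0
        | exact f02
        | exact f11
        | exact f12
        | exact m10
        | (rw [m20]; exact f02)
        | (rw [m21]; exact f12)
        | (rw [f22]; ring)
  exact congr_cancel' P A _ hPu key

lemma core {k : Type*} [Field k] [IsAlgClosed k] (h2 : (2:k) ≠ 0)
    (A0 A1 B : Matrix (Fin 3) (Fin 3) k)
    (hA0s : A0ᵀ = A0) (hA1s : A1ᵀ = A1) (hBs : ∀ i j, B i j = B j i)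
    (hdetB : B.det ≠ 0)
    (hcomb : ∀ f : Fin 3 → k, dotProduct f (A0.mulVec f) = 0 →
      dotProduct f (A1.mulVec f) = 0 → dotProduct f (B.mulVec f) = 0)
    (hnp : ¬ ∃ l0 l1 : k, A0 = l0 • B ∧ A1 = l1 • B) :
    ∃ x1 x2 x3 x4 : Projectivization k (Fin 3 → k),
      {x : Projectivization k (Fin 3 → k) | ∃ (f : Fin 3 → k) (hf : f ≠ 0),
        Projectivization.mk k f hf = x ∧ dotProduct f (A0.mulVec f) = 0 ∧
        dotProduct f (A1.mulVec f) = 0} ⊆ {x1, x2, x3, x4} := by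
  classical
  obtain ⟨P, c, hdetP, hc, hGram⟩ := exists_hyperbolic h2 B hBs hdetB
  have hPu : IsUnit P.det := isUnit_iff_ne_zero.mpr hdetP
  -- every solution point comes from the Veronese parametrization
  have hparam : ∀ f : Fin 3 → k, f ≠ 0 →
      dotProduct f (A0.mulVec f) = 0 → dotProduct f (A1.mulVec f) = 0 →
      ∃ s t : k, ¬(s = 0 ∧ t = 0) ∧ f = psiMap P c s t := by
    intro f hf h0 h1
    have hBf := hcomb f h0 h1
    have hfξ : P.mulVec (P⁻¹.mulVec f) = f := by
      rw [Matrix.mulVec_mulVec, Matrix.mul_nonsing_inv _ hPu, Matrix.one_mulVec]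
    have hξ0 : P⁻¹.mulVec f ≠ 0 := by
      intro h
      rw [h, Matrix.mulVec_zero] at hfξ
      exact hf hfξ.symm
    rw [← hfξ, congr_vec, hGram, gram_expand] at hBf
    obtain ⟨s, t, hst, hη⟩ := conic_param h2 hc _ hξ0 hBf
    refine ⟨s, t, hst, ?_⟩
    rw [← hfξ]
    unfold psiMap
    rw [hη]
  -- the case where one of the two quartics is nonzero
  have aux : ∀ A : Matrix (Fin 3) (Fin 3) k, (A = A0 ∨ A = A1) →
      ¬((Pᵀ*A*P) 0 0 = 0 ∧ (Pᵀ*A*P) 0 2 + (Pᵀ*A*P) 2 0 = 0 ∧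
        (Pᵀ*A*P) 2 2 - (c/2)*((Pᵀ*A*P) 0 1 + (Pᵀ*A*P) 1 0) = 0 ∧
        -(c/2)*((Pᵀ*A*P) 1 2 + (Pᵀ*A*P) 2 1) = 0 ∧
        ((c/2)*(c/2))*((Pᵀ*A*P) 1 1) = 0) →
      ∃ x1 x2 x3 x4 : Projectivization k (Fin 3 → k),
        {x : Projectivization k (Fin 3 → k) | ∃ (f : Fin 3 → k) (hf : f ≠ 0),
          Projectivization.mk k f hf = x ∧ dotProduct f (A0.mulVec f) = 0 ∧
          dotProduct f (A1.mulVec f) = 0} ⊆ {x1, x2, x3, x4} := by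
    intro A hA01 hnz
    obtain ⟨g0, hg0⟩ : ∃ g0, g0 = (Pᵀ*A*P) 0 0 := ⟨_, rfl⟩
    obtain ⟨g1, hg1⟩ : ∃ g1, g1 = (Pᵀ*A*P) 0 2 + (Pᵀ*A*P) 2 0 := ⟨_, rfl⟩
    obtain ⟨g2, hg2⟩ : ∃ g2, g2 = (Pᵀ*A*P) 2 2 - (c/2)*((Pᵀ*A*P) 0 1 + (Pᵀ*A*P) 1 0) :=
      ⟨_, rfl⟩
    obtain ⟨g3, hg3⟩ : ∃ g3, g3 = -(c/2)*((Pᵀ*A*P) 1 2 + (Pᵀ*A*P) 2 1) := ⟨_, rfl⟩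
    obtain ⟨g4, hg4⟩ : ∃ g4, g4 = ((c/2)*(c/2))*((Pᵀ*A*P) 1 1) := ⟨_, rfl⟩
    rw [← hg0, ← hg1, ← hg2, ← hg3, ← hg4] at hnz
    have hquart : ∀ s t : k, dotProduct (psiMap P c s t) (A.mulVec (psiMap P c s t))
        = g0*s^4 + g1*s^3*t + g2*s^2*t^2 + g3*s*t^3 + g4*t^4 := by
      intro s t
      rw [psiMap_quart, ← hg0, ← hg1, ← hg2, ← hg3, ← hg4]
    -- nonvanishing proofs for mk
    have hne1 : ∀ s : k, psiMap P c s 1 ≠ 0 := fun s =>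
      psiMap_ne_zero hdetP hc h2 (fun h => one_ne_zero h.2)
    have hne10 : psiMap P c 1 0 ≠ 0 :=
      psiMap_ne_zero hdetP hc h2 (fun h => one_ne_zero h.1)
    by_cases hq0 : g0 = 0
    · -- cubic case, special point at infinity included
      set q : Polynomial k := C g1 * X^3 + C g2 * X^2 + C g3 * X + C g4 with hq
      have hqne : q ≠ 0 := by
        intro h
        apply hnz
        have c3 : g1 = 0 := by
          have := congrArg (fun p => Polynomial.coeff p 3) h
          simpa [hq, Polynomial.coeff_add, Polynomial.coeff_C_mul,
            Polynomial.coeff_X_pow, Polynomial.coeff_C] using this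
        have c2 : g2 = 0 := by
          have := congrArg (fun p => Polynomial.coeff p 2) h
          simpa [hq, Polynomial.coeff_add, Polynomial.coeff_C_mul,
            Polynomial.coeff_X_pow, Polynomial.coeff_C] using this
        have c1 : g3 = 0 := by
          have := congrArg (fun p => Polynomial.coeff p 1) h
          simpa [hq, Polynomial.coeff_add, Polynomial.coeff_C_mul,
            Polynomial.coeff_X_pow, Polynomial.coeff_C] using this
        have c0 : g4 = 0 := by
          have := congrArg (fun p => Polynomial.coeff p 0) h
          simpa [hq, Polynomial.coeff_add, Polynomial.coeff_C_mul,
            Polynomial.coeff_X_pow, Polynomial.coeff_C] using this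
        exact ⟨hq0, c3, c2, c1, c0⟩
      have hqd : q.natDegree ≤ 3 := by rw [hq]; compute_degree
      set F : Finset (Projectivization k (Fin 3 → k)) :=
        insert (Projectivization.mk k (psiMap P c 1 0) hne10)
          (q.roots.toFinset.image
            (fun s => Projectivization.mk k (psiMap P c s 1) (hne1 s))) with hF
      have hFcard : F.card ≤ 4 := by
        refine (Finset.card_insert_le _ _).trans ?_
        have h1 := Finset.card_image_le (s := q.roots.toFinset)
          (f := fun s => Projectivization.mk k (psiMap P c s 1) (hne1 s))
        have h2' := (q.roots.toFinset_card_le).trans ((Polynomial.card_roots' q).trans hqd)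
        omega
      obtain ⟨x1, x2, x3, x4, hsub4⟩ :=
        list_subset_four (Projectivization.mk k (psiMap P c 1 0) hne10) F hFcard
      refine ⟨x1, x2, x3, x4, ?_⟩
      refine Set.Subset.trans ?_ hsub4
      rintro x ⟨f, hf, rfl, h0, h1⟩
      obtain ⟨s, t, hst, hfψ⟩ := hparam f hf h0 h1
      have hAf : dotProduct f (A.mulVec f) = 0 := by
        rcases hA01 with rfl | rfl
        · exact h0
        · exact h1
      have hGt : g0*s^4 + g1*s^3*t + g2*s^2*t^2 + g3*s*t^3 + g4*t^4 = 0 := by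
        rw [← hquart s t, ← hfψ]; exact hAf
      by_cases ht : t = 0
      · -- special point
        have hs0 : s ≠ 0 := fun hs => hst ⟨hs, ht⟩
        have hfs : f = (s*s) • psiMap P c 1 0 := by
          have := psiMap_smul P c s 1 0
          rw [mul_one, mul_zero] at this
          rw [hfψ, ht, this]
        have hmk : Projectivization.mk k f hf
            = Projectivization.mk k (psiMap P c 1 0) hne10 := by
          rw [Projectivization.mk_eq_mk_iff]
          exact ⟨Units.mk0 (s*s) (mul_ne_zero hs0 hs0), hfs.symm⟩
        rw [hmk]
        exact Finset.mem_coe.mpr (Finset.mem_insert_self _ _)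
      · -- root point
        have hroot : q.eval (s/t) = 0 := by
          have hev : q.eval (s/t) = g1*(s/t)^3 + g2*(s/t)^2 + g3*(s/t) + g4 := by
            simp [hq]
          rw [hev]
          have hT : (t:k)^4 ≠ 0 := pow_ne_zero _ ht
          rw [hq0] at hGt
          have hrt : s = (s/t)*t := by field_simp
          rw [hrt] at hGt
          have hfac : t^4 * (g1*(s/t)^3 + g2*(s/t)^2 + g3*(s/t) + g4) = 0 := by
            linear_combination hGt
          exact (mul_eq_zero.mp hfac).resolve_left hT
        have hfs : f = (t*t) • psiMap P c (s/t) 1 := by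
          have := psiMap_smul P c t (s/t) 1
          rw [mul_one] at this
          rw [show t * (s/t) = s from by field_simp] at this
          rw [hfψ, this]
        have hmk : Projectivization.mk k f hf
            = Projectivization.mk k (psiMap P c (s/t) 1) (hne1 _) := by
          rw [Projectivization.mk_eq_mk_iff]
          exact ⟨Units.mk0 (t*t) (mul_ne_zero ht ht), hfs.symm⟩
        rw [hmk]
        refine Finset.mem_coe.mpr (Finset.mem_insert_of_mem ?_)
        exact Finset.mem_image.mpr ⟨s/t, Multiset.mem_toFinset.mpr
          (Polynomial.mem_roots'.mpr ⟨hqne, hroot⟩), rfl⟩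
    · -- quartic case, leading coefficient nonzero
      set q : Polynomial k := C g0 * X^4 + C g1 * X^3 + C g2 * X^2 + C g3 * X + C g4
        with hq
      have hqne : q ≠ 0 := by
        intro h
        apply hq0
        have := congrArg (fun p => Polynomial.coeff p 4) h
        simpa [hq, Polynomial.coeff_add, Polynomial.coeff_C_mul,
          Polynomial.coeff_X_pow, Polynomial.coeff_C] using this
      have hqd : q.natDegree ≤ 4 := by rw [hq]; compute_degree
      set F : Finset (Projectivization k (Fin 3 → k)) :=
        q.roots.toFinset.image
          (fun s => Projectivization.mk k (psiMap P c s 1) (hne1 s)) with hF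
      have hFcard : F.card ≤ 4 := by
        refine (Finset.card_image_le).trans ?_
        exact (q.roots.toFinset_card_le).trans ((Polynomial.card_roots' q).trans hqd)
      obtain ⟨x1, x2, x3, x4, hsub4⟩ :=
        list_subset_four (Projectivization.mk k (psiMap P c 1 0) hne10) F hFcard
      refine ⟨x1, x2, x3, x4, ?_⟩
      refine Set.Subset.trans ?_ hsub4
      rintro x ⟨f, hf, rfl, h0, h1⟩
      obtain ⟨s, t, hst, hfψ⟩ := hparam f hf h0 h1
      have hAf : dotProduct f (A.mulVec f) = 0 := by
        rcases hA01 with rfl | rfl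
        · exact h0
        · exact h1
      have hGt : g0*s^4 + g1*s^3*t + g2*s^2*t^2 + g3*s*t^3 + g4*t^4 = 0 := by
        rw [← hquart s t, ← hfψ]; exact hAf
      have ht : t ≠ 0 := by
        intro ht
        apply hq0
        rw [ht] at hGt
        have hs0 : s ≠ 0 := fun hs => hst ⟨hs, ht⟩
        have hg : g0 * s^4 = 0 := by linear_combination hGt
        exact (mul_eq_zero.mp hg).resolve_right (pow_ne_zero _ hs0)
      have hroot : q.eval (s/t) = 0 := by
        have hev : q.eval (s/t) = g0*(s/t)^4 + g1*(s/t)^3 + g2*(s/t)^2 + g3*(s/t) + g4 := by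
          simp [hq]
        rw [hev]
        have hT : (t:k)^4 ≠ 0 := pow_ne_zero _ ht
        have hrt : s = (s/t)*t := by field_simp
        rw [hrt] at hGt
        have hfac : t^4 * (g0*(s/t)^4 + g1*(s/t)^3 + g2*(s/t)^2 + g3*(s/t) + g4) = 0 := by
          linear_combination hGt
        exact (mul_eq_zero.mp hfac).resolve_left hT
      have hfs : f = (t*t) • psiMap P c (s/t) 1 := by
        have := psiMap_smul P c t (s/t) 1
        rw [mul_one] at this
        rw [show t * (s/t) = s from by field_simp] at this
        rw [hfψ, this]
      have hmk : Projectivization.mk k f hf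
          = Projectivization.mk k (psiMap P c (s/t) 1) (hne1 _) := by
        rw [Projectivization.mk_eq_mk_iff]
        exact ⟨Units.mk0 (t*t) (mul_ne_zero ht ht), hfs.symm⟩
      rw [hmk]
      refine Finset.mem_coe.mpr ?_
      exact Finset.mem_image.mpr ⟨s/t, Multiset.mem_toFinset.mpr
        (Polynomial.mem_roots'.mpr ⟨hqne, hroot⟩), rfl⟩
  by_cases hz0 : ((Pᵀ*A0*P) 0 0 = 0 ∧ (Pᵀ*A0*P) 0 2 + (Pᵀ*A0*P) 2 0 = 0 ∧
      (Pᵀ*A0*P) 2 2 - (c/2)*((Pᵀ*A0*P) 0 1 + (Pᵀ*A0*P) 1 0) = 0 ∧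
      -(c/2)*((Pᵀ*A0*P) 1 2 + (Pᵀ*A0*P) 2 1) = 0 ∧
      ((c/2)*(c/2))*((Pᵀ*A0*P) 1 1) = 0)
  · by_cases hz1 : ((Pᵀ*A1*P) 0 0 = 0 ∧ (Pᵀ*A1*P) 0 2 + (Pᵀ*A1*P) 2 0 = 0 ∧
        (Pᵀ*A1*P) 2 2 - (c/2)*((Pᵀ*A1*P) 0 1 + (Pᵀ*A1*P) 1 0) = 0 ∧
        -(c/2)*((Pᵀ*A1*P) 1 2 + (Pᵀ*A1*P) 2 1) = 0 ∧
        ((c/2)*(c/2))*((Pᵀ*A1*P) 1 1) = 0)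
    · exfalso
      obtain ⟨e0, e1, e2, e3, e4⟩ := hz0
      obtain ⟨f0, f1, f2, f3, f4⟩ := hz1
      exact hnp ⟨_, _, prop_of_coeffs_zero h2 A0 B P hc hA0s hPu hGram e0 e1 e2 e3 e4,
        prop_of_coeffs_zero h2 A1 B P hc hA1s hPu hGram f0 f1 f2 f3 f4⟩
    · exact aux A1 (Or.inr rfl) hz1
  · exact aux A0 (Or.inl rfl) hz0

lemma apolar_quad0 {k : Type*} [CommRing k] (w : Fin 6 → k) (f : Fin 3 → k)
    (hap : pair w (formMul (formMul f f) ![1,0]) = 0) :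
    dotProduct f ((Matrix.of fun i j : Fin 3 =>
      w ⟨(i:ℕ)+(j:ℕ), by omega⟩).mulVec f) = 0 := by
  simp only [pair, formMul, Fintype.sum_prod_type, Fin.sum_univ_succ,
    Fin.sum_univ_zero, Fin.val_succ, Fin.val_zero, Matrix.cons_val_zero,
    Matrix.cons_val_one, Matrix.head_cons, mul_ite, ite_mul, zero_mul, mul_zero,
    mul_one, one_mul] at hap
  norm_num at hap
  rw [show (Fin.succ 2 : Fin 6) = ⟨3, by omega⟩ from rfl,
    show ((Fin.succ 2).succ : Fin 6) = ⟨4, by omega⟩ from rfl,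
    show (2 : Fin 6) = ⟨2, by omega⟩ from rfl,
    show (1 : Fin 6) = ⟨1, by omega⟩ from rfl,
    show (0 : Fin 6) = ⟨0, by omega⟩ from rfl] at hap
  simp only [dotProduct, Matrix.mulVec, Matrix.of_apply, Fin.sum_univ_three]
  norm_num
  simp only [show (2 : Fin 6) = ⟨2, by omega⟩ from rfl,
    show (1 : Fin 6) = ⟨1, by omega⟩ from rfl,
    show (0 : Fin 6) = ⟨0, by omega⟩ from rfl]
  linear_combination hap

lemma apolar_quad1 {k : Type*} [CommRing k] (w : Fin 6 → k) (f : Fin 3 → k)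
    (hap : pair w (formMul (formMul f f) ![0,1]) = 0) :
    dotProduct f ((Matrix.of fun i j : Fin 3 =>
      w ⟨(i:ℕ)+(j:ℕ)+1, by omega⟩).mulVec f) = 0 := by
  simp only [pair, formMul, Fintype.sum_prod_type, Fin.sum_univ_succ,
    Fin.sum_univ_zero, Fin.val_succ, Fin.val_zero, Matrix.cons_val_zero,
    Matrix.cons_val_one, Matrix.head_cons, mul_ite, ite_mul, zero_mul, mul_zero,
    mul_one, one_mul] at hap
  norm_num at hap
  rw [show (Fin.succ 2 : Fin 6) = ⟨3, by omega⟩ from rfl,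
    show ((Fin.succ 2).succ : Fin 6) = ⟨4, by omega⟩ from rfl,
    show (((Fin.succ 2).succ).succ : Fin 6) = ⟨5, by omega⟩ from rfl,
    show (2 : Fin 6) = ⟨2, by omega⟩ from rfl,
    show (1 : Fin 6) = ⟨1, by omega⟩ from rfl] at hap
  simp only [dotProduct, Matrix.mulVec, Matrix.of_apply, Fin.sum_univ_three]
  norm_num
  simp only [show (2 : Fin 6) = ⟨2, by omega⟩ from rfl,
    show (1 : Fin 6) = ⟨1, by omega⟩ from rfl,
    show (0 : Fin 6) = ⟨0, by omega⟩ from rfl]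
  linear_combination hap

end AuxiliaryLemmas

open Matrix Polynomial in
/-- Over an algebraically closed field of characteristic different from two, if the
catalecticant covariant of `w ∈ V₅` is nonzero, then there are at most `4` classes
`[f] ∈ ℙ(V₂^*)` of nonzero binary quadratic forms with `f²` apolar to `w`. -/
theorem stmt18 {k : Type*} [Field k] [IsAlgClosed k] (hchar : (2 : k) ≠ 0)
    (w : Fin 6 → k) (hcat : cat22 w ≠ 0) :
    ∃ x1 x2 x3 x4 : Projectivization k (Fin 3 → k),
      {x : Projectivization k (Fin 3 → k) |
        ∃ (f : Fin 3 → k) (hf : f ≠ 0), Projectivization.mk k f hf = x ∧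
          ∀ h : Fin 2 → k, pair w (formMul (formMul f f) h) = 0} ⊆
        {x1, x2, x3, x4} := by
  classical
  obtain ⟨A0, hA0⟩ : ∃ A0 : Matrix (Fin 3) (Fin 3) k,
      A0 = Matrix.of (fun i j : Fin 3 => w ⟨(i:ℕ)+(j:ℕ), by omega⟩) := ⟨_, rfl⟩
  obtain ⟨A1, hA1⟩ : ∃ A1 : Matrix (Fin 3) (Fin 3) k,
      A1 = Matrix.of (fun i j : Fin 3 => w ⟨(i:ℕ)+(j:ℕ)+1, by omega⟩) := ⟨_, rfl⟩
  -- a point where the catalecticant does not vanish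
  obtain ⟨v, hv⟩ : ∃ v : Fin 2 → k, MvPolynomial.eval v (cat22 w) ≠ 0 := by
    by_contra hcon
    push_neg at hcon
    exact hcat (MvPolynomial.funext (fun x => by rw [hcon x, map_zero]))
  obtain ⟨B, hB⟩ : ∃ B : Matrix (Fin 3) (Fin 3) k, B = v 0 • A1 - v 1 • A0 := ⟨_, rfl⟩
  have hBentry : ∀ i j : Fin 3, B i j = v 0 * A1 i j - v 1 * A0 i j := by
    intro i j
    rw [hB]
    simp [Matrix.sub_apply, Matrix.smul_apply]
  have hdetB : B.det ≠ 0 := by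
    intro h
    apply hv
    have heq : MvPolynomial.eval v (cat22 w) = B.det := by
      unfold cat22
      rw [RingHom.map_det]
      congr 1
      funext i j
      rw [RingHom.mapMatrix_apply, Matrix.map_apply, hBentry, hA0, hA1]
      simp
    rw [heq, h]
  have hA0s : A0ᵀ = A0 := by
    rw [hA0]
    funext i j
    show w _ = w _
    exact congrArg w (Fin.ext (by simp [Nat.add_comm]))
  have hA1s : A1ᵀ = A1 := by
    rw [hA1]
    funext i j
    show w _ = w _
    exact congrArg w (Fin.ext (by simp [Nat.add_comm]))
  have hBs : ∀ i j, B i j = B j i := by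
    intro i j
    rw [hBentry, hBentry]
    have e0 : A0 i j = A0 j i := by
      conv_lhs => rw [← hA0s]
      rw [Matrix.transpose_apply]
    have e1 : A1 i j = A1 j i := by
      conv_lhs => rw [← hA1s]
      rw [Matrix.transpose_apply]
    rw [e0, e1]
  have hcomb : ∀ f : Fin 3 → k, dotProduct f (A0.mulVec f) = 0 →
      dotProduct f (A1.mulVec f) = 0 → dotProduct f (B.mulVec f) = 0 := by
    intro f h0 h1
    rw [hB, Matrix.sub_mulVec, Matrix.smul_mulVec, Matrix.smul_mulVec,
      dotProduct_sub, dotProduct_smul, dotProduct_smul, h0, h1]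
    simp
  have hnp : ¬ ∃ l0 l1 : k, A0 = l0 • B ∧ A1 = l1 • B := by
    rintro ⟨l0, l1, hA0B, hA1B⟩
    have hrel : ∀ i j : Fin 3, l1 * A0 i j = l0 * A1 i j := by
      intro i j
      have hs : l1 • A0 = l0 • A1 := by
        rw [hA0B, hA1B, smul_smul, smul_smul, mul_comm]
      have := congrFun (congrFun hs i) j
      simpa [Matrix.smul_apply, smul_eq_mul] using this
    have hl : ¬(l0 = 0 ∧ l1 = 0) := by
      rintro ⟨rfl, rfl⟩
      apply hdetB
      have hB0 : B = 0 := by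
        rw [hB, hA0B, hA1B]
        simp
      rw [hB0]
      exact Matrix.det_zero
    have r0 : l1 * w ⟨0, by omega⟩ = l0 * w ⟨1, by omega⟩ := by
      have h := hrel 0 0
      rw [hA0, hA1] at h
      exact h
    have r1 : l1 * w ⟨1, by omega⟩ = l0 * w ⟨2, by omega⟩ := by
      have h := hrel 0 1
      rw [hA0, hA1] at h
      exact h
    have r2 : l1 * w ⟨2, by omega⟩ = l0 * w ⟨3, by omega⟩ := by
      have h := hrel 0 2
      rw [hA0, hA1] at h
      exact h
    have r3 : l1 * w ⟨3, by omega⟩ = l0 * w ⟨4, by omega⟩ := by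
      have h := hrel 1 2
      rw [hA0, hA1] at h
      exact h
    apply hdetB
    rw [← Matrix.exists_mulVec_eq_zero_iff]
    refine ⟨![l1, -l0, 0], ?_, ?_⟩
    · intro h
      apply hl
      constructor
      · have h1 := congrFun h 1
        simpa using h1
      · have h0 := congrFun h 0
        simpa using h0
    · funext i
      have b00 : B 0 0 = v 0 * w ⟨1, by omega⟩ - v 1 * w ⟨0, by omega⟩ := by
        rw [hBentry, hA0, hA1]; rfl
      have b01 : B 0 1 = v 0 * w ⟨2, by omega⟩ - v 1 * w ⟨1, by omega⟩ := by
        rw [hBentry, hA0, hA1]; rfl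
      have b10 : B 1 0 = v 0 * w ⟨2, by omega⟩ - v 1 * w ⟨1, by omega⟩ := by
        rw [hBentry, hA0, hA1]; rfl
      have b11 : B 1 1 = v 0 * w ⟨3, by omega⟩ - v 1 * w ⟨2, by omega⟩ := by
        rw [hBentry, hA0, hA1]; rfl
      have b20 : B 2 0 = v 0 * w ⟨3, by omega⟩ - v 1 * w ⟨2, by omega⟩ := by
        rw [hBentry, hA0, hA1]; rfl
      have b21 : B 2 1 = v 0 * w ⟨4, by omega⟩ - v 1 * w ⟨3, by omega⟩ := by
        rw [hBentry, hA0, hA1]; rfl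
      fin_cases i
      · show B 0 0 * l1 + (B 0 1 * (-l0) + (B 0 2 * 0 + 0)) = 0
        rw [b00, b01]
        linear_combination v 0 * r1 - v 1 * r0
      · show B 1 0 * l1 + (B 1 1 * (-l0) + (B 1 2 * 0 + 0)) = 0
        rw [b10, b11]
        linear_combination v 0 * r2 - v 1 * r1
      · show B 2 0 * l1 + (B 2 1 * (-l0) + (B 2 2 * 0 + 0)) = 0
        rw [b20, b21]
        linear_combination v 0 * r3 - v 1 * r2
  obtain ⟨x1, x2, x3, x4, hsub⟩ := core hchar A0 A1 B hA0s hA1s hBs hdetB hcomb hnp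
  refine ⟨x1, x2, x3, x4, ?_⟩
  intro x hx
  apply hsub
  obtain ⟨f, hf, rfl, hap⟩ := hx
  refine ⟨f, hf, rfl, ?_, ?_⟩
  · rw [hA0]
    exact apolar_quad0 w f (hap ![1,0])
  · rw [hA1]
    exact apolar_quad1 w f (hap ![0,1])
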